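/- Let G be a pair of d-dimensional layer-permuted butterflies with left layer permutation π and right layer permutation σ, and fix q ≤ d, m = d − q. For binary strings x and y of length m, the left sub-butterfly x* and the right sub-butterfly *y share at least one node on layer d if and only if for all i ∈ {1,…,m} and j ∈ {1,…,m} with π(i) = σ(q + j), one has x_i = y_j. -/

import Mathlib

/-- A binary string of length `d`. -/
abbrev BStr (d : ℕ) := Fin d → Bool

/-- The string `b` lies in the left sub-butterfly `x*` of a pair of
`d`-dimensional layer-permuted butterflies with left layer permutation `π`
(written `0`-based): bit `π i` of `b` equals `x i` for all `i < m = d - q`. -/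
def leftSubMem (d q : ℕ) (π : Equiv.Perm (Fin d))
    (x : Fin (d - q) → Bool) (b : BStr d) : Prop :=
  ∀ i : Fin (d - q), b (π (Fin.castLE (Nat.sub_le d q) i)) = x i

/-- The string `b` lies in the right sub-butterfly `*y` of a pair of
`d`-dimensional layer-permuted butterflies with right layer permutation `σ`
(written `0`-based): bit `σ (q + j)` of `b` equals `y j` for all
`j < m = d - q`. -/
def rightSubMem (d q : ℕ) (hq : q ≤ d) (σ : Equiv.Perm (Fin d))
    (y : Fin (d - q) → Bool) (b : BStr d) : Prop :=
  ∀ j : Fin (d - q), b (σ (Fin.castLE (by omega) (Fin.natAdd q j))) = y j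

/-- The left sub-butterfly `x*` and the right sub-butterfly `*y` share at least
one node on layer `d`. -/
def connRel (d q : ℕ) (hq : q ≤ d) (π σ : Equiv.Perm (Fin d))
    (x y : Fin (d - q) → Bool) : Prop :=
  ∃ b : BStr d, leftSubMem d q π x b ∧ rightSubMem d q hq σ y b

/-- The `q`-dimensional sub-butterfly connectivity graph of a pair of
`d`-dimensional layer-permuted butterflies: a bipartite graph whose left
vertices (`Sum.inl`) are the `2^m` left sub-butterflies `x*` and whose right
vertices (`Sum.inr`) are the `2^m` right sub-butterflies `*y`, adjacent iff
the two sub-butterflies share a node on layer `d`. -/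
def connGraph (d q : ℕ) (hq : q ≤ d) (π σ : Equiv.Perm (Fin d)) :
    SimpleGraph ((Fin (d - q) → Bool) ⊕ (Fin (d - q) → Bool)) where
  Adj u v :=
    (∃ x y, u = Sum.inl x ∧ v = Sum.inr y ∧ connRel d q hq π σ x y) ∨
    (∃ x y, u = Sum.inr y ∧ v = Sum.inl x ∧ connRel d q hq π σ x y)
  symm := by
    constructor
    rintro u v (⟨x, y, rfl, rfl, h⟩ | ⟨x, y, rfl, rfl, h⟩)
    · exact Or.inr ⟨x, y, rfl, rfl, h⟩
    · exact Or.inl ⟨x, y, rfl, rfl, h⟩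
  loopless := by
    constructor
    rintro u (⟨x, y, h1, h2, -⟩ | ⟨x, y, h1, h2, -⟩) <;> subst h1 <;> simp at h2

/-- the left sub-butterfly `x*` and the right sub-butterfly `*y`
share a node on layer `d` iff for all `i, j < m = d - q` with
`π i = σ (q + j)` one has `x i = y j`. -/
theorem connRel_iff_agree_on_shared_bits
    (d q : ℕ) (hq : q ≤ d) (π σ : Equiv.Perm (Fin d))
    (x y : Fin (d - q) → Bool) :
    connRel d q hq π σ x y ↔
      ∀ (i j : Fin (d - q)),
        π (Fin.castLE (Nat.sub_le d q) i) =
          σ (Fin.castLE (by omega) (Fin.natAdd q j)) →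
        x i = y j := by
  classical
  constructor
  · rintro ⟨b, hl, hr⟩ i j hij
    rw [← hl i, hij, hr j]
  · intro h
    refine ⟨fun p =>
      if hL : ∃ i : Fin (d - q), π (Fin.castLE (Nat.sub_le d q) i) = p then
        x hL.choose
      else if hR : ∃ j : Fin (d - q),
          σ (Fin.castLE (by omega) (Fin.natAdd q j)) = p then
        y hR.choose
      else false, ?_, ?_⟩
    · intro i
      have hL : ∃ i' : Fin (d - q),
          π (Fin.castLE (Nat.sub_le d q) i') = π (Fin.castLE (Nat.sub_le d q) i) :=
        ⟨i, rfl⟩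
      simp only [hL, dif_pos]
      have := hL.choose_spec
      have hi : hL.choose = i := by
        have := π.injective this
        exact Fin.castLE_injective _ this
      rw [hi]
    · intro j
      by_cases hL : ∃ i' : Fin (d - q),
          π (Fin.castLE (Nat.sub_le d q) i') =
            σ (Fin.castLE (by omega) (Fin.natAdd q j))
      · simp only [hL, dif_pos]
        exact h hL.choose j hL.choose_spec
      · have hR : ∃ j' : Fin (d - q),
            σ (Fin.castLE (by omega) (Fin.natAdd q j')) =
              σ (Fin.castLE (by omega) (Fin.natAdd q j)) := ⟨j, rfl⟩
        simp only [hL, dif_neg, not_false_iff, hR, dif_pos]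
        have := σ.injective hR.choose_spec
        have hj : hR.choose = j := by
          have h2 := Fin.ext_iff.mp (Fin.castLE_injective _ this)
          simp only [Fin.natAdd, Fin.val_mk] at h2
          exact Fin.ext (by omega)
        rw [hj]
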